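/- Let c be an integer and let T_1,...,T_k be admissible twigs (k ≥ 0). Then the star matrix S(c; T_1,...,T_k) is positive definite if and only if ∑_{i=1}^k d(T̄_i)/d(T_i) < c. -/

import Mathlib

open Matrix BigOperators

/-- The intersection-type matrix of a twig `A = [a_1,...,a_r]`: the `r × r` symmetric
tridiagonal matrix with diagonal entries `a_1,...,a_r` and `-1` on the sub/super-diagonals. -/
def twigMatrix (A : List ℤ) : Matrix (Fin A.length) (Fin A.length) ℤ :=
  fun i j =>
    if i = j then A.get i
    else if (i : ℕ) + 1 = (j : ℕ) ∨ (j : ℕ) + 1 = (i : ℕ) then -1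
    else 0

/-- The determinant `d(A)` of a twig; in particular `d([]) = 1`. -/
def twigDet (A : List ℤ) : ℤ := (twigMatrix A).det

/-- A twig is admissible if it is nonempty and all its entries are `≥ 2`. -/
def Admissible (A : List ℤ) : Prop := A ≠ [] ∧ ∀ a ∈ A, 2 ≤ a

/-- The star matrix `S(c; T_1,...,T_k)`: symmetric matrix indexed by a central index
together with the disjoint union of the index sets of the twigs `T i`, with diagonal
entry `c` at the center, the principal submatrix on the indices of `T i` equal to
`M(T i)`, entries `-1` between the center and the first index of each `T i`, and
all other entries `0`. -/
def starMatrix (c : ℤ) {k : ℕ} (T : Fin k → List ℤ) :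
    Matrix (Unit ⊕ (Σ i : Fin k, Fin (T i).length))
           (Unit ⊕ (Σ i : Fin k, Fin (T i).length)) ℤ :=
  fun p q =>
    match p, q with
    | Sum.inl _, Sum.inl _ => c
    | Sum.inl _, Sum.inr ⟨_, j⟩ => if (j : ℕ) = 0 then -1 else 0
    | Sum.inr ⟨_, j⟩, Sum.inl _ => if (j : ℕ) = 0 then -1 else 0
    | Sum.inr ⟨i, j⟩, Sum.inr ⟨i', j'⟩ =>
        if h : i = i' then twigMatrix (T i) j (Fin.cast (by rw [h]) j') else 0

lemma twigMatrix_symm (A : List ℤ) (i j : Fin A.length) :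
    twigMatrix A j i = twigMatrix A i j := by
  unfold twigMatrix
  rcases eq_or_ne i j with rfl | h
  · rfl
  · rw [if_neg (Ne.symm h), if_neg h, if_congr (or_comm) rfl rfl]

lemma twigMatrix_succ_succ (a : ℤ) (A : List ℤ) (i j : Fin A.length) :
    twigMatrix (a :: A) i.succ j.succ = twigMatrix A i j := by
  unfold twigMatrix
  rcases eq_or_ne i j with rfl | h
  · rw [if_pos rfl, if_pos rfl]; rfl
  · have hiff : ((i.succ : ℕ) + 1 = (j.succ : ℕ) ∨ (j.succ : ℕ) + 1 = (i.succ : ℕ)) ↔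
        ((i : ℕ) + 1 = (j : ℕ) ∨ (j : ℕ) + 1 = (i : ℕ)) := by
      simp only [Fin.val_succ]; omega
    rw [if_neg (by simpa [Fin.ext_iff] using fun hh => h (Fin.ext hh) : ¬ i.succ = j.succ),
      if_neg h, if_congr hiff rfl rfl]

lemma twigMatrix_zero_zero (a : ℤ) (A : List ℤ) :
    twigMatrix (a :: A) (0 : Fin (A.length + 1)) (0 : Fin (A.length + 1)) = a := by
  rw [twigMatrix, if_pos rfl]
  simp

lemma twigMatrix_zero_succ (a : ℤ) (A : List ℤ) (j : Fin A.length) :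
    twigMatrix (a :: A) (0 : Fin (A.length + 1)) j.succ = if (j : ℕ) = 0 then -1 else 0 := by
  unfold twigMatrix
  rw [if_neg (by simp [Fin.ext_iff])]
  rcases eq_or_ne (j : ℕ) 0 with h | h
  · rw [if_pos (by simp [Fin.val_succ, h]), if_pos h]
  · rw [if_neg (by simp [Fin.val_succ]; omega), if_neg h]

lemma twigMatrix_succ_zero (a : ℤ) (A : List ℤ) (i : Fin A.length) :
    twigMatrix (a :: A) i.succ (0 : Fin (A.length + 1)) = if (i : ℕ) = 0 then -1 else 0 := by
  rw [twigMatrix_symm, twigMatrix_zero_succ]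

lemma twigDet_nil : twigDet ([] : List ℤ) = 1 := by
  have : (twigMatrix [] : Matrix (Fin 0) (Fin 0) ℤ).det = 1 := Matrix.det_fin_zero
  exact this

lemma twigDet_singleton (a : ℤ) : twigDet [a] = a := by
  have h : (twigMatrix [a] : Matrix (Fin 1) (Fin 1) ℤ).det
      = twigMatrix [a] (0 : Fin 1) (0 : Fin 1) := Matrix.det_fin_one _
  rw [twigDet, h]
  exact twigMatrix_zero_zero a []

lemma twigDet_cons (a b : ℤ) (L : List ℤ) :
    twigDet (a :: b :: L) = a * twigDet (b :: L) - twigDet L := by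
  set n := L.length with hn
  let M : Matrix (Fin (n + 2)) (Fin (n + 2)) ℤ := twigMatrix (a :: b :: L)
  have hM : twigDet (a :: b :: L) = M.det := rfl
  have h00 : M 0 0 = a := twigMatrix_zero_zero a (b :: L)
  have h10 : M (Fin.succ 0) 0 = -1 := by
    have := twigMatrix_succ_zero a (b :: L) (0 : Fin (L.length + 1))
    simpa using this
  have hsub0 : M.submatrix Fin.succ Fin.succ = twigMatrix (b :: L) := by
    ext i j; exact twigMatrix_succ_succ a (b :: L) i j
  let K : Matrix (Fin (n + 1)) (Fin (n + 1)) ℤ := M.submatrix (Fin.succ 0).succAbove Fin.succ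
  have hK00 : K 0 0 = -1 := by
    show M ((Fin.succ 0).succAbove 0) (Fin.succ 0) = -1
    rw [Fin.succ_zero_eq_one, Fin.one_succAbove_zero]
    have := twigMatrix_zero_succ a (b :: L) (0 : Fin (L.length + 1))
    simpa using this
  have hK0succ : ∀ j : Fin n, K 0 j.succ = 0 := by
    intro j
    show M ((Fin.succ 0).succAbove 0) (Fin.succ j.succ) = 0
    rw [Fin.succ_zero_eq_one, Fin.one_succAbove_zero]
    have := twigMatrix_zero_succ a (b :: L) j.succ
    simpa using this
  have hKsub : K.submatrix Fin.succ Fin.succ = twigMatrix L := by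
    ext i j
    show M ((Fin.succ 0).succAbove i.succ) (Fin.succ j.succ) = _
    rw [Fin.succ_zero_eq_one, Fin.one_succAbove_succ]
    exact (twigMatrix_succ_succ a (b :: L) i.succ j.succ).trans
      (twigMatrix_succ_succ b L i j)
  have hKdet : K.det = - twigDet L := by
    rw [Matrix.det_succ_row_zero, Fin.sum_univ_succ]
    have htail : ∑ j : Fin n, (-1 : ℤ) ^ ((j.succ : Fin (n+1)) : ℕ) * K 0 j.succ *
        (K.submatrix Fin.succ (j.succ).succAbove).det = 0 := by
      apply Finset.sum_eq_zero
      intro j _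
      rw [hK0succ j, mul_zero, zero_mul]
    rw [htail, hK00]
    rw [show ((0 : Fin (n+1)).succAbove) = Fin.succ from Fin.succAbove_zero]
    rw [hKsub]
    simp [twigDet]
  have hzero : ∑ i : Fin n, (-1 : ℤ) ^ ((i.succ.succ : Fin (n+2)) : ℕ) * M i.succ.succ 0 *
      (M.submatrix (i.succ.succ).succAbove Fin.succ).det = 0 := by
    apply Finset.sum_eq_zero
    intro i _
    have : M i.succ.succ 0 = 0 := by
      have := twigMatrix_succ_zero a (b :: L) i.succ
      simpa using this
    rw [this, mul_zero, zero_mul]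
  rw [hM, Matrix.det_succ_column_zero, Fin.sum_univ_succ, Fin.sum_univ_succ]
  rw [hzero, h00, h10]
  rw [show ((0 : Fin (n+2)).succAbove) = Fin.succ from Fin.succAbove_zero]
  rw [hsub0]
  rw [show (M.submatrix (Fin.succ 0).succAbove Fin.succ) = K from rfl]
  rw [hKdet]
  simp [twigDet]
  ring

lemma twigDet_facts : ∀ A : List ℤ, (∀ x ∈ A, 2 ≤ x) →
    0 < twigDet A ∧ (A ≠ [] → twigDet A.tail < twigDet A) := by
  intro A
  induction A with
  | nil =>
    intro _
    rw [twigDet_nil]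
    exact ⟨one_pos, fun h => absurd rfl h⟩
  | cons a A' ih =>
    intro h2
    have ha : 2 ≤ a := h2 a (List.mem_cons_self)
    have ih' := ih (fun x hx => h2 x (List.mem_cons_of_mem _ hx))
    cases A' with
    | nil =>
      rw [show (a :: []).tail = ([] : List ℤ) from rfl, twigDet_singleton, twigDet_nil]
      exact ⟨by omega, fun _ => by omega⟩
    | cons b L =>
      obtain ⟨hpos, hlt⟩ := ih'
      have hlt' : twigDet L < twigDet (b :: L) := by
        have := hlt (by simp)
        rwa [List.tail_cons] at this
      have h1 : twigDet (b :: L) < twigDet (a :: b :: L) := by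
        rw [twigDet_cons]; nlinarith
      refine ⟨by linarith, fun _ => by rwa [List.tail_cons]⟩

def twigQ (A : List ℤ) : Matrix (Fin A.length) (Fin A.length) ℚ :=
  (twigMatrix A).map ((↑) : ℤ → ℚ)

lemma twigQ_det (A : List ℤ) : (twigQ A).det = (twigDet A : ℚ) := by
  have := (RingHom.map_det (Int.castRingHom ℚ) (twigMatrix A)).symm
  simpa [twigQ, twigDet] using this

lemma twigQ_transpose (A : List ℤ) : (twigQ A)ᵀ = twigQ A := by
  ext i j
  simp only [twigQ, Matrix.transpose_apply, Matrix.map_apply]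
  rw [twigMatrix_symm]

lemma twigQ_isHermitian (A : List ℤ) : (twigQ A).IsHermitian := by
  show (twigQ A)ᴴ = twigQ A
  ext i j
  simp only [Matrix.conjTranspose_apply, star_trivial]
  exact congrFun (congrFun (twigQ_transpose A) i) j

lemma qform_nonneg {n : Type*} [Fintype n] {M : Matrix n n ℚ} (h : M.PosSemidef)
    (v : n → ℚ) : 0 ≤ v ⬝ᵥ M *ᵥ v := by simpa using h.dotProduct_mulVec_nonneg v

lemma qform_pos {n : Type*} [Fintype n] {M : Matrix n n ℚ} (h : M.PosDef)
    {v : n → ℚ} (hv : v ≠ 0) : 0 < v ⬝ᵥ M *ᵥ v := by simpa using h.dotProduct_mulVec_pos hv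

lemma sum_if_zero {n : ℕ} (hn : 0 < n) (f : Fin n → ℚ) :
    ∑ j : Fin n, (if (j : ℕ) = 0 then (1 : ℚ) else 0) * f j = f ⟨0, hn⟩ := by
  rw [Finset.sum_eq_single (⟨0, hn⟩ : Fin n)]
  · simp
  · intro b _ hb
    rw [if_neg (fun h => hb (Fin.ext h)), zero_mul]
  · intro h; exact absurd (Finset.mem_univ _) h

lemma sq_complete {n : ℕ} (M : Matrix (Fin n) (Fin n) ℚ) (hsym : Mᵀ = M)
    (j0 : Fin n) (w : Fin n → ℚ) (hw : M *ᵥ w = Pi.single j0 1) (y : Fin n → ℚ) (t : ℚ) :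
    (y - t • w) ⬝ᵥ M *ᵥ (y - t • w)
      = y ⬝ᵥ M *ᵥ y - 2 * t * y j0 + t ^ 2 * w j0 := by
  have h1 : ∀ v : Fin n → ℚ, v ⬝ᵥ M *ᵥ w = v j0 := by
    intro v; rw [hw, dotProduct_single, mul_one]
  have h2 : ∀ v : Fin n → ℚ, w ⬝ᵥ M *ᵥ v = v j0 := by
    intro v
    rw [Matrix.dotProduct_mulVec, ← hsym, Matrix.vecMul_transpose, hw,
      single_dotProduct, one_mul]
  simp only [Matrix.mulVec_sub, dotProduct_sub, sub_dotProduct,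
    Matrix.mulVec_smul, dotProduct_smul, smul_dotProduct, smul_eq_mul,
    h1 y, h2 y, h1 w, h2 w]
  ring

lemma twig_inv (A : List ℤ) (h2 : ∀ x ∈ A, 2 ≤ x) (hne : A ≠ []) :
    ∃ w : Fin A.length → ℚ,
      (twigQ A) *ᵥ w = Pi.single ⟨0, List.length_pos_iff.mpr hne⟩ 1 ∧
      w ⟨0, List.length_pos_iff.mpr hne⟩ = (twigDet A.tail : ℚ) / (twigDet A : ℚ) := by
  cases A with
  | nil => exact absurd rfl hne
  | cons a A' =>
    set n := A'.length with hn
    let M : Matrix (Fin (n + 1)) (Fin (n + 1)) ℚ := twigQ (a :: A')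
    have hdet : M.det = (twigDet (a :: A') : ℚ) := twigQ_det (a :: A')
    have hdpos : 0 < twigDet (a :: A') := (twigDet_facts _ h2).1
    have hdetne : M.det ≠ 0 := by
      rw [hdet]
      exact_mod_cast hdpos.ne'
    let w : Fin (n + 1) → ℚ := M⁻¹ *ᵥ Pi.single 0 1
    have hMw : M *ᵥ w = Pi.single (0 : Fin (n + 1)) 1 := by
      rw [Matrix.mulVec_mulVec, Matrix.mul_nonsing_inv _ (isUnit_iff_ne_zero.mpr hdetne),
        Matrix.one_mulVec]
    have hw0 : w 0 = M⁻¹ 0 0 := by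
      show (M⁻¹ *ᵥ Pi.single 0 1) 0 = M⁻¹ 0 0
      rw [Matrix.mulVec_single]
      simp
    have hsub : M.submatrix Fin.succ Fin.succ = twigQ A' := by
      ext i j
      show ((twigMatrix (a :: A') i.succ j.succ : ℤ) : ℚ) = _
      rw [twigMatrix_succ_succ]
      rfl
    have hadj : M.adjugate 0 0 = (twigDet A' : ℚ) := by
      have h := Matrix.adjugate_fin_succ_eq_det_submatrix M 0 0
      rw [h]
      rw [show ((0 : Fin (n + 1)).succAbove) = Fin.succ from Fin.succAbove_zero]
      rw [hsub, twigQ_det]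
      simp
    have hinv00 : M⁻¹ 0 0 = (twigDet A' : ℚ) / (twigDet (a :: A') : ℚ) := by
      rw [Matrix.inv_def]
      rw [Matrix.smul_apply, hadj, Ring.inverse_eq_inv', hdet, smul_eq_mul,
        inv_mul_eq_div]
    refine ⟨w, hMw, ?_⟩
    show w 0 = _
    rw [hw0, hinv00]
    rfl

lemma cons_expand (a : ℤ) (A : List ℤ) (x : Fin (A.length + 1) → ℚ) :
    x ⬝ᵥ (twigQ (a :: A)) *ᵥ x
      = (a : ℚ) * x 0 ^ 2
        - 2 * x 0 * (∑ j : Fin A.length, (if (j : ℕ) = 0 then (1 : ℚ) else 0) * x j.succ)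
        + (x ∘ Fin.succ) ⬝ᵥ (twigQ A) *ᵥ (x ∘ Fin.succ) := by
  let M : Matrix (Fin (A.length + 1)) (Fin (A.length + 1)) ℚ := twigQ (a :: A)
  have e00 : M 0 0 = (a : ℚ) := by
    show ((twigMatrix (a :: A) (0 : Fin (A.length + 1)) (0 : Fin (A.length + 1)) : ℤ) : ℚ) = _
    rw [twigMatrix_zero_zero]
  have e0s : ∀ j : Fin A.length, M 0 j.succ = if (j : ℕ) = 0 then (-1 : ℚ) else 0 := by
    intro j
    show ((twigMatrix (a :: A) (0 : Fin (A.length + 1)) j.succ : ℤ) : ℚ) = _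
    rw [twigMatrix_zero_succ]
    split_ifs <;> simp
  have es0 : ∀ i : Fin A.length, M i.succ 0 = if (i : ℕ) = 0 then (-1 : ℚ) else 0 := by
    intro i
    show ((twigMatrix (a :: A) i.succ (0 : Fin (A.length + 1)) : ℤ) : ℚ) = _
    rw [twigMatrix_succ_zero]
    split_ifs <;> simp
  have ess : ∀ i j : Fin A.length, M i.succ j.succ = twigQ A i j := by
    intro i j
    show ((twigMatrix (a :: A) i.succ j.succ : ℤ) : ℚ) = _
    rw [twigMatrix_succ_succ]
    rfl
  have hrow0 : (M *ᵥ x) 0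
      = (a : ℚ) * x 0 + ∑ j : Fin A.length, (if (j : ℕ) = 0 then (-1 : ℚ) else 0) * x j.succ := by
    show ∑ q, M 0 q * x q = _
    rw [Fin.sum_univ_succ, e00]
    congr 1
    exact Finset.sum_congr rfl fun j _ => by rw [e0s j]
  have hrows : ∀ i : Fin A.length, (M *ᵥ x) i.succ
      = (if (i : ℕ) = 0 then (-1 : ℚ) else 0) * x 0 + (twigQ A *ᵥ (x ∘ Fin.succ)) i := by
    intro i
    show ∑ q, M i.succ q * x q = _
    rw [Fin.sum_univ_succ, es0 i]
    congr 1
    exact Finset.sum_congr rfl fun j _ => by rw [ess i j]; rfl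
  show ∑ p, x p * (M *ᵥ x) p = _
  rw [Fin.sum_univ_succ, hrow0]
  have hsplit : ∑ j : Fin A.length, x j.succ * (M *ᵥ x) j.succ
      = (∑ i : Fin A.length, x i.succ * ((if (i : ℕ) = 0 then (-1 : ℚ) else 0) * x 0))
        + ∑ i : Fin A.length, x i.succ * (twigQ A *ᵥ (x ∘ Fin.succ)) i := by
    rw [← Finset.sum_add_distrib]
    exact Finset.sum_congr rfl fun i _ => by rw [hrows i]; ring
  rw [hsplit]
  have hS1 : ∑ j : Fin A.length, (if (j : ℕ) = 0 then (-1 : ℚ) else 0) * x j.succ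
      = - ∑ j : Fin A.length, (if (j : ℕ) = 0 then (1 : ℚ) else 0) * x j.succ := by
    rw [← Finset.sum_neg_distrib]
    exact Finset.sum_congr rfl fun j _ => by split_ifs <;> ring
  have hS2 : ∑ i : Fin A.length, x i.succ * ((if (i : ℕ) = 0 then (-1 : ℚ) else 0) * x 0)
      = - (x 0 * ∑ j : Fin A.length, (if (j : ℕ) = 0 then (1 : ℚ) else 0) * x j.succ) := by
    rw [Finset.mul_sum, ← Finset.sum_neg_distrib]
    exact Finset.sum_congr rfl fun j _ => by split_ifs <;> ring
  rw [hS1, hS2]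
  have hQ : (x ∘ Fin.succ) ⬝ᵥ twigQ A *ᵥ (x ∘ Fin.succ)
      = ∑ i : Fin A.length, x i.succ * (twigQ A *ᵥ (x ∘ Fin.succ)) i := rfl
  rw [hQ]
  ring

lemma twig_posdef : ∀ A : List ℤ, (∀ x ∈ A, 2 ≤ x) → A ≠ [] → (twigQ A).PosDef := by
  intro A
  induction A with
  | nil => intro _ h; exact absurd rfl h
  | cons a A' ih =>
    intro h2 _
    have ha : 2 ≤ (a : ℚ) := by exact_mod_cast h2 a (List.mem_cons_self)
    refine Matrix.PosDef.of_dotProduct_mulVec_pos (twigQ_isHermitian _) ?_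
    intro x hx
    rw [star_trivial]
    have hexp := cons_expand a A' x
    by_cases hA' : A' = []
    · subst hA'
      have hx0 : x (0 : Fin (([] : List ℤ).length + 1)) ≠ 0 := by
        intro h0
        apply hx
        funext p
        have hp : (p : ℕ) < 1 := p.2
        have hp0 : p = (0 : Fin (([] : List ℤ).length + 1)) :=
          Fin.ext (by simpa using Nat.lt_one_iff.mp hp)
        simpa [hp0] using h0
      rw [hexp]
      haveI : IsEmpty (Fin ([] : List ℤ).length) := ⟨fun j => Nat.not_lt_zero j.1 j.2⟩
      rw [Finset.univ_eq_empty, Finset.sum_empty]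
      have hQ : (x ∘ Fin.succ) ⬝ᵥ twigQ [] *ᵥ (x ∘ Fin.succ) = 0 := by
        show ∑ i : Fin ([] : List ℤ).length, _ = (0 : ℚ)
        rw [Finset.univ_eq_empty, Finset.sum_empty]
      rw [hQ]
      have hsq : 0 < x (0 : Fin (([] : List ℤ).length + 1)) ^ 2 := by positivity
      nlinarith
    · have h2' : ∀ z ∈ A', 2 ≤ z := fun z hz => h2 z (List.mem_cons_of_mem _ hz)
      have hlen : 0 < A'.length := List.length_pos_iff.mpr hA'
      obtain ⟨w, hw, hw0⟩ := twig_inv A' h2' hA'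
      have hPD' := ih h2' hA'
      have dpos' : 0 < twigDet A' := (twigDet_facts A' h2').1
      have dtpos : 0 < twigDet A'.tail :=
        (twigDet_facts A'.tail (fun z hz => h2' z (List.mem_of_mem_tail hz))).1
      have dlt : twigDet A'.tail < twigDet A' := (twigDet_facts A' h2').2 hA'
      have hμ1 : (twigDet A'.tail : ℚ) / (twigDet A' : ℚ) < 1 := by
        rw [div_lt_one (by exact_mod_cast dpos')]
        exact_mod_cast dlt
      rw [hexp, sum_if_zero hlen (fun j => x j.succ)]
      have hbr : 0 ≤ (x ∘ Fin.succ) ⬝ᵥ twigQ A' *ᵥ (x ∘ Fin.succ)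
          - 2 * x (0 : Fin (A'.length + 1)) * ((x ∘ Fin.succ) ⟨0, hlen⟩) + (x (0 : Fin (A'.length + 1))) ^ 2 * w ⟨0, hlen⟩ := by
        rw [← sq_complete (twigQ A') (twigQ_transpose A') ⟨0, hlen⟩ w hw (x ∘ Fin.succ) (x (0 : Fin (A'.length + 1)))]
        exact qform_nonneg hPD'.posSemidef _
      have hyj : (x ∘ Fin.succ) (⟨0, hlen⟩ : Fin A'.length) = x (Fin.succ ⟨0, hlen⟩) := rfl
      rw [hyj, hw0] at hbr
      by_cases hx0 : x (0 : Fin (A'.length + 1)) = 0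
      · have hyne : (x ∘ Fin.succ) ≠ 0 := by
          intro hy
          apply hx
          funext p
          refine Fin.cases ?_ (fun i => ?_) p
          · exact hx0
          · exact congrFun hy i
        have hQpos := qform_pos hPD' hyne
        rw [hx0]
        simpa using hQpos
      · have hsq : 0 < x (0 : Fin (A'.length + 1)) ^ 2 := by positivity
        have hkey : 0 < ((a : ℚ) - (twigDet A'.tail : ℚ) / (twigDet A' : ℚ)) * (x (0 : Fin (A'.length + 1))) ^ 2 :=
          mul_pos (by linarith) hsq
        nlinarith [hbr, hkey]

lemma s_inl_inl (c : ℤ) {k : ℕ} (T : Fin k → List ℤ) (u u' : Unit) :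
    ((starMatrix c T).map ((↑) : ℤ → ℚ)) (Sum.inl u) (Sum.inl u') = (c : ℚ) := rfl

lemma s_inl_inr (c : ℤ) {k : ℕ} (T : Fin k → List ℤ) (u : Unit) (i : Fin k)
    (j : Fin (T i).length) :
    ((starMatrix c T).map ((↑) : ℤ → ℚ)) (Sum.inl u) (Sum.inr ⟨i, j⟩)
      = if (j : ℕ) = 0 then (-1 : ℚ) else 0 := by
  show ((if (j : ℕ) = 0 then (-1 : ℤ) else 0 : ℤ) : ℚ) = _
  split_ifs <;> simp

lemma s_inr_inl (c : ℤ) {k : ℕ} (T : Fin k → List ℤ) (u : Unit) (i : Fin k)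
    (j : Fin (T i).length) :
    ((starMatrix c T).map ((↑) : ℤ → ℚ)) (Sum.inr ⟨i, j⟩) (Sum.inl u)
      = if (j : ℕ) = 0 then (-1 : ℚ) else 0 := by
  show ((if (j : ℕ) = 0 then (-1 : ℤ) else 0 : ℤ) : ℚ) = _
  split_ifs <;> simp

lemma s_inr_inr_eq (c : ℤ) {k : ℕ} (T : Fin k → List ℤ) (i : Fin k)
    (j j' : Fin (T i).length) :
    ((starMatrix c T).map ((↑) : ℤ → ℚ)) (Sum.inr ⟨i, j⟩) (Sum.inr ⟨i, j'⟩)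
      = twigQ (T i) j j' := by
  show ((dite (i = i) _ (fun _ => (0 : ℤ)) : ℤ) : ℚ) = _
  rw [dif_pos rfl]
  rfl

lemma s_inr_inr_ne (c : ℤ) {k : ℕ} (T : Fin k → List ℤ) {i i' : Fin k} (h : i ≠ i')
    (j : Fin (T i).length) (j' : Fin (T i').length) :
    ((starMatrix c T).map ((↑) : ℤ → ℚ)) (Sum.inr ⟨i, j⟩) (Sum.inr ⟨i', j'⟩) = 0 := by
  show ((dite (i = i') _ (fun _ => (0 : ℤ)) : ℤ) : ℚ) = _
  rw [dif_neg h]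
  simp

lemma twigQ_symm (A : List ℤ) (i j : Fin A.length) : twigQ A j i = twigQ A i j := by
  show ((twigMatrix A j i : ℤ) : ℚ) = _
  rw [twigMatrix_symm]
  rfl

lemma star_herm (c : ℤ) {k : ℕ} (T : Fin k → List ℤ) :
    ((starMatrix c T).map ((↑) : ℤ → ℚ)).IsHermitian := by
  show ((starMatrix c T).map ((↑) : ℤ → ℚ))ᴴ = (starMatrix c T).map ((↑) : ℤ → ℚ)
  ext p q
  rw [Matrix.conjTranspose_apply, star_trivial]
  rcases p with u | ⟨i, j⟩ <;> rcases q with u' | ⟨i', j'⟩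
  · rfl
  · rfl
  · rfl
  · by_cases h : i = i'
    · subst h
      rw [s_inr_inr_eq, s_inr_inr_eq, twigQ_symm]
    · rw [s_inr_inr_ne c T (fun hh => h hh.symm), s_inr_inr_ne c T h]

lemma sum_if_zero' {n : ℕ} (hn : 0 < n) (f : Fin n → ℚ) :
    ∑ j : Fin n, (if (j : ℕ) = 0 then (-1 : ℚ) else 0) * f j = - f ⟨0, hn⟩ := by
  rw [Finset.sum_eq_single (⟨0, hn⟩ : Fin n)]
  · simp
  · intro b _ hb
    rw [if_neg (fun h => hb (Fin.ext h)), zero_mul]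
  · intro h; exact absurd (Finset.mem_univ _) h

lemma sum_if_zero'' {n : ℕ} (hn : 0 < n) (f : Fin n → ℚ) (t : ℚ) :
    ∑ j : Fin n, f j * ((if (j : ℕ) = 0 then (-1 : ℚ) else 0) * t) = - (f ⟨0, hn⟩ * t) := by
  rw [Finset.sum_eq_single (⟨0, hn⟩ : Fin n)]
  · simp
  · intro b _ hb
    rw [if_neg (fun h => hb (Fin.ext h)), zero_mul, mul_zero]
  · intro h; exact absurd (Finset.mem_univ _) h

lemma star_expand (c : ℤ) {k : ℕ} (T : Fin k → List ℤ) (hT : ∀ i, T i ≠ [])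
    (x : (Unit ⊕ (Σ i : Fin k, Fin (T i).length)) → ℚ) :
    x ⬝ᵥ ((starMatrix c T).map ((↑) : ℤ → ℚ)) *ᵥ x
      = (c : ℚ) * x (Sum.inl ()) ^ 2
        - 2 * x (Sum.inl ()) * ∑ i, x (Sum.inr ⟨i, ⟨0, List.length_pos_iff.mpr (hT i)⟩⟩)
        + ∑ i, (fun j => x (Sum.inr ⟨i, j⟩)) ⬝ᵥ (twigQ (T i)) *ᵥ (fun j => x (Sum.inr ⟨i, j⟩)) := by
  set S := (starMatrix c T).map ((↑) : ℤ → ℚ) with hS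
  have e00 : ∀ u u', S (Sum.inl u) (Sum.inl u') = (c : ℚ) := fun u u' => s_inl_inl c T u u'
  have e0r : ∀ u (i : Fin k) (j : Fin (T i).length), S (Sum.inl u) (Sum.inr ⟨i, j⟩)
      = if (j : ℕ) = 0 then (-1 : ℚ) else 0 := fun u i j => s_inl_inr c T u i j
  have er0 : ∀ u (i : Fin k) (j : Fin (T i).length), S (Sum.inr ⟨i, j⟩) (Sum.inl u)
      = if (j : ℕ) = 0 then (-1 : ℚ) else 0 := fun u i j => s_inr_inl c T u i j
  have erre : ∀ (i : Fin k) (j j' : Fin (T i).length), S (Sum.inr ⟨i, j⟩) (Sum.inr ⟨i, j'⟩)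
      = twigQ (T i) j j' := fun i j j' => s_inr_inr_eq c T i j j'
  have errn : ∀ {i i' : Fin k}, i ≠ i' → ∀ (j : Fin (T i).length) (j' : Fin (T i').length),
      S (Sum.inr ⟨i, j⟩) (Sum.inr ⟨i', j'⟩) = 0 := fun h j j' => s_inr_inr_ne c T h j j'
  have hrow0 : (S *ᵥ x) (Sum.inl ())
      = (c : ℚ) * x (Sum.inl ())
        - ∑ i, x (Sum.inr ⟨i, ⟨0, List.length_pos_iff.mpr (hT i)⟩⟩) := by
    show (∑ p, S (Sum.inl ()) p * x p) = _
    rw [Fintype.sum_sum_type, Fintype.sum_unique, ← Finset.univ_sigma_univ, Finset.sum_sigma]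
    simp only [show (default : Unit) = () from rfl]
    rw [e00]
    have hinner : ∀ i : Fin k, ∑ j : Fin (T i).length,
        S (Sum.inl ()) (Sum.inr ⟨i, j⟩) * x (Sum.inr ⟨i, j⟩)
        = - x (Sum.inr ⟨i, ⟨0, List.length_pos_iff.mpr (hT i)⟩⟩) := by
      intro i
      rw [show (∑ j : Fin (T i).length, S (Sum.inl ()) (Sum.inr ⟨i, j⟩) * x (Sum.inr ⟨i, j⟩))
          = ∑ j : Fin (T i).length, (if (j : ℕ) = 0 then (-1 : ℚ) else 0) * x (Sum.inr ⟨i, j⟩)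
          from Finset.sum_congr rfl fun j _ => by rw [e0r]]
      exact sum_if_zero' (List.length_pos_iff.mpr (hT i)) _
    rw [Finset.sum_congr rfl fun i _ => hinner i, Finset.sum_neg_distrib]
    ring
  have hrowr : ∀ (i : Fin k) (j : Fin (T i).length), (S *ᵥ x) (Sum.inr ⟨i, j⟩)
      = (if (j : ℕ) = 0 then (-1 : ℚ) else 0) * x (Sum.inl ())
        + (twigQ (T i) *ᵥ fun j' => x (Sum.inr ⟨i, j'⟩)) j := by
    intro i j
    show (∑ p, S (Sum.inr ⟨i, j⟩) p * x p) = _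
    rw [Fintype.sum_sum_type, Fintype.sum_unique, ← Finset.univ_sigma_univ, Finset.sum_sigma]
    simp only [show (default : Unit) = () from rfl]
    rw [er0]
    congr 1
    rw [Finset.sum_eq_single i]
    · exact Finset.sum_congr rfl fun j' _ => by rw [erre]
    · intro i' _ hne
      exact Finset.sum_eq_zero fun j' _ => by
        rw [errn (fun hh => hne hh.symm), zero_mul]
    · intro h; exact absurd (Finset.mem_univ _) h
  show (∑ p, x p * (S *ᵥ x) p) = _
  rw [Fintype.sum_sum_type, Fintype.sum_unique, ← Finset.univ_sigma_univ, Finset.sum_sigma]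
  simp only [show (default : Unit) = () from rfl]
  rw [hrow0]
  have hin : ∀ i : Fin k, ∑ j : Fin (T i).length,
      x (Sum.inr ⟨i, j⟩) * (S *ᵥ x) (Sum.inr ⟨i, j⟩)
      = - (x (Sum.inr ⟨i, ⟨0, List.length_pos_iff.mpr (hT i)⟩⟩) * x (Sum.inl ()))
        + (fun j => x (Sum.inr ⟨i, j⟩)) ⬝ᵥ (twigQ (T i)) *ᵥ (fun j => x (Sum.inr ⟨i, j⟩)) := by
    intro i
    have hsplit : ∑ j : Fin (T i).length,
        x (Sum.inr ⟨i, j⟩) * (S *ᵥ x) (Sum.inr ⟨i, j⟩)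
        = (∑ j : Fin (T i).length, x (Sum.inr ⟨i, j⟩)
            * ((if (j : ℕ) = 0 then (-1 : ℚ) else 0) * x (Sum.inl ())))
          + ∑ j : Fin (T i).length, x (Sum.inr ⟨i, j⟩)
            * (twigQ (T i) *ᵥ fun j' => x (Sum.inr ⟨i, j'⟩)) j := by
      rw [← Finset.sum_add_distrib]
      exact Finset.sum_congr rfl fun j _ => by rw [hrowr i j]; ring
    rw [hsplit, sum_if_zero'' (List.length_pos_iff.mpr (hT i)) _ _]
    rfl
  rw [Finset.sum_congr rfl fun i _ => hin i, Finset.sum_add_distrib, Finset.sum_neg_distrib,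
    ← Finset.sum_mul]
  ring


/-- for an integer `c` and admissible twigs `T_1,...,T_k` (`k ≥ 0`),
the star matrix `S(c; T_1,...,T_k)` is positive definite if and only if
`∑_i d(T̄_i)/d(T_i) < c`. -/
theorem stmt7 (c : ℤ) (k : ℕ) (T : Fin k → List ℤ)
    (hT : ∀ i, Admissible (T i)) :
    ((starMatrix c T).map ((↑) : ℤ → ℚ)).PosDef ↔
      ∑ i, (twigDet (T i).tail : ℚ) / (twigDet (T i) : ℚ) < (c : ℚ) := by
  have hTne : ∀ i, T i ≠ [] := fun i => (hT i).1
  have h2 : ∀ i, ∀ z ∈ T i, 2 ≤ z := fun i => (hT i).2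
  choose w hw hw0 using fun i => twig_inv (T i) (h2 i) (hTne i)
  have hPD : ∀ i, (twigQ (T i)).PosDef := fun i => twig_posdef (T i) (h2 i) (hTne i)
  constructor
  · intro hS
    have hxne : (Sum.elim (fun _ => (1 : ℚ)) (fun p => w p.1 p.2) :
        (Unit ⊕ (Σ i : Fin k, Fin (T i).length)) → ℚ) ≠ 0 := by
      intro h
      have := congrFun h (Sum.inl ())
      simp at this
    have hq := hS.dotProduct_mulVec_pos hxne
    rw [star_trivial, star_expand c T hTne _] at hq
    simp only [Sum.elim_inl, Sum.elim_inr] at hq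
    have e3 : ∀ i, w i ⬝ᵥ twigQ (T i) *ᵥ w i
        = w i ⟨0, List.length_pos_iff.mpr (hTne i)⟩ := fun i => by
      rw [hw i, dotProduct_single, mul_one]
    simp only [e3, hw0] at hq
    linarith
  · intro hsum
    refine Matrix.PosDef.of_dotProduct_mulVec_pos (star_herm c T) ?_
    intro x hx
    rw [star_trivial, star_expand c T hTne x]
    have hbr : ∀ i, 0 ≤ (fun j => x (Sum.inr ⟨i, j⟩)) ⬝ᵥ twigQ (T i) *ᵥ (fun j => x (Sum.inr ⟨i, j⟩))
        - 2 * x (Sum.inl ()) * x (Sum.inr ⟨i, ⟨0, List.length_pos_iff.mpr (hTne i)⟩⟩)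
        + x (Sum.inl ()) ^ 2 * ((twigDet (T i).tail : ℚ) / (twigDet (T i) : ℚ)) := by
      intro i
      have hc := sq_complete (twigQ (T i)) (twigQ_transpose _)
        ⟨0, List.length_pos_iff.mpr (hTne i)⟩ (w i) (hw i)
        (fun j => x (Sum.inr ⟨i, j⟩)) (x (Sum.inl ()))
      rw [hw0 i] at hc
      rw [← hc]
      exact qform_nonneg (hPD i).posSemidef _
    rcases eq_or_ne (x (Sum.inl ())) 0 with ht | ht
    · obtain ⟨p, hp⟩ := Function.ne_iff.mp hx
      rcases p with u | ⟨i0, j0⟩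
      · cases u
        simp only [Pi.zero_apply] at hp
        exact absurd ht hp
      · have hyne : (fun j => x (Sum.inr ⟨i0, j⟩)) ≠ 0 := by
          intro h
          exact hp (by simpa using congrFun h j0)
        have hpos := qform_pos (hPD i0) hyne
        have hsumpos : 0 < ∑ i, (fun j => x (Sum.inr ⟨i, j⟩)) ⬝ᵥ twigQ (T i) *ᵥ
            (fun j => x (Sum.inr ⟨i, j⟩)) :=
          Finset.sum_pos' (fun i _ => qform_nonneg (hPD i).posSemidef _)
            ⟨i0, Finset.mem_univ _, hpos⟩
        rw [ht]
        simpa using hsumpos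
    · have hsq : 0 < x (Sum.inl ()) ^ 2 := by positivity
      have hkey : 0 < ((c : ℚ) - ∑ i, (twigDet (T i).tail : ℚ) / (twigDet (T i) : ℚ))
          * x (Sum.inl ()) ^ 2 := mul_pos (by linarith) hsq
      have hbrsum : 0 ≤ ∑ i,
          ((fun j => x (Sum.inr ⟨i, j⟩)) ⬝ᵥ twigQ (T i) *ᵥ (fun j => x (Sum.inr ⟨i, j⟩))
          - 2 * x (Sum.inl ()) * x (Sum.inr ⟨i, ⟨0, List.length_pos_iff.mpr (hTne i)⟩⟩)
          + x (Sum.inl ()) ^ 2 * ((twigDet (T i).tail : ℚ) / (twigDet (T i) : ℚ))) :=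
        Finset.sum_nonneg fun i _ => hbr i
      rw [Finset.sum_add_distrib, Finset.sum_sub_distrib, ← Finset.mul_sum, ← Finset.mul_sum]
        at hbrsum
      nlinarith [hbrsum, hkey]
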